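/- For any fixed real number r0 > 0, the series I_2(m, r0) tends to 0 as the integer m tends to infinity, where I_2(m, r0) = ∑_{k=1}^∞ (−1)^k · (r0/2)^{2k} · ((2m+3)/(2m+2k+3)) · ∑_{k1+k2=k, k1,k2 ≥ 0} Γ(m+3/2)² / (k1! · k2! · Γ(m+k1+3/2) · Γ(m+k2+3/2)). -/

import Mathlib

open Real Filter Topology

/-- `I₂(m, r₀)` from the paper:
`∑_{k=1}^∞ (−1)^k (r₀/2)^{2k} ((2m+3)/(2m+2k+3)) ·
  ∑_{k₁+k₂=k} Γ(m+3/2)² / (k₁! k₂! Γ(m+k₁+3/2) Γ(m+k₂+3/2))`. -/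
noncomputable def I2 (m : ℕ) (r0 : ℝ) : ℝ :=
  ∑' k : ℕ,
    (-1 : ℝ) ^ (k + 1) * (r0 / 2) ^ (2 * (k + 1)) *
      ((2 * (m : ℝ) + 3) / (2 * (m : ℝ) + 2 * ((k : ℝ) + 1) + 3)) *
      ∑ p ∈ Finset.HasAntidiagonal.antidiagonal (k + 1),
        Real.Gamma ((m : ℝ) + 3 / 2) ^ 2 /
          ((Nat.factorial p.1 : ℝ) * (Nat.factorial p.2 : ℝ) *
            Real.Gamma ((m : ℝ) + (p.1 : ℝ) + 3 / 2) * Real.Gamma ((m : ℝ) + (p.2 : ℝ) + 3 / 2))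

lemma gamma_mul_pow_le (x : ℝ) (hx : 0 < x) (j : ℕ) :
    Real.Gamma x * x ^ j ≤ Real.Gamma (x + j) := by
  induction j with
  | zero => simp
  | succ n ih =>
    have hxn : (0:ℝ) < x + n := by positivity
    have h1 : Real.Gamma (x + ((n:ℝ)+1)) = (x + n) * Real.Gamma (x + n) := by
      rw [show x + ((n:ℝ) + 1) = (x + n) + 1 by ring, Real.Gamma_add_one hxn.ne']
    have hG : 0 < Real.Gamma x := Real.Gamma_pos_of_pos hx
    calc Real.Gamma x * x ^ (n+1) = x * (Real.Gamma x * x ^ n) := by ring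
      _ ≤ (x + n) * (Real.Gamma x * x ^ n) := by
          apply mul_le_mul_of_nonneg_right (by linarith [Nat.cast_nonneg (α := ℝ) n])
          positivity
      _ ≤ (x + n) * Real.Gamma (x + n) := mul_le_mul_of_nonneg_left ih hxn.le
      _ = Real.Gamma (x + ((n:ℕ):ℝ) + 1) := by rw [← h1]; ring_nf
      _ = Real.Gamma (x + ((n+1:ℕ):ℝ)) := by push_cast; ring_nf

lemma I2_term_bound (m k : ℕ) (r0 : ℝ) (hr0 : 0 < r0) :
    |(-1 : ℝ) ^ (k + 1) * (r0 / 2) ^ (2 * (k + 1)) *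
      ((2 * (m : ℝ) + 3) / (2 * (m : ℝ) + 2 * ((k : ℝ) + 1) + 3)) *
      ∑ p ∈ Finset.HasAntidiagonal.antidiagonal (k + 1),
        Real.Gamma ((m : ℝ) + 3 / 2) ^ 2 /
          ((Nat.factorial p.1 : ℝ) * (Nat.factorial p.2 : ℝ) *
            Real.Gamma ((m : ℝ) + (p.1 : ℝ) + 3 / 2) * Real.Gamma ((m : ℝ) + (p.2 : ℝ) + 3 / 2))|
    ≤ (r0 ^ 2 / (2 * (m:ℝ) + 3)) ^ (k + 1) := by
  set x : ℝ := (m : ℝ) + 3 / 2 with hxdef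
  have hx : 0 < x := by positivity
  have hG : 0 < Real.Gamma x := Real.Gamma_pos_of_pos hx
  -- bound each summand
  have hsummand : ∀ p ∈ Finset.HasAntidiagonal.antidiagonal (k + 1),
      Real.Gamma ((m : ℝ) + 3 / 2) ^ 2 /
          ((Nat.factorial p.1 : ℝ) * (Nat.factorial p.2 : ℝ) *
            Real.Gamma ((m : ℝ) + (p.1 : ℝ) + 3 / 2) * Real.Gamma ((m : ℝ) + (p.2 : ℝ) + 3 / 2))
        ≤ (x ^ (k+1))⁻¹ := by
    intro p hp
    have hps : p.1 + p.2 = k + 1 := Finset.HasAntidiagonal.mem_antidiagonal.mp hp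
    have h1 : Real.Gamma x * x ^ p.1 ≤ Real.Gamma ((m : ℝ) + (p.1 : ℝ) + 3 / 2) := by
      have := gamma_mul_pow_le x hx p.1
      rwa [show x + (p.1 : ℝ) = (m : ℝ) + (p.1 : ℝ) + 3 / 2 by rw [hxdef]; ring] at this
    have h2 : Real.Gamma x * x ^ p.2 ≤ Real.Gamma ((m : ℝ) + (p.2 : ℝ) + 3 / 2) := by
      have := gamma_mul_pow_le x hx p.2
      rwa [show x + (p.2 : ℝ) = (m : ℝ) + (p.2 : ℝ) + 3 / 2 by rw [hxdef]; ring] at this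
    have hf1 : (1:ℝ) ≤ (Nat.factorial p.1 : ℝ) := by
      exact_mod_cast Nat.one_le_iff_ne_zero.mpr (Nat.factorial_ne_zero _)
    have hf2 : (1:ℝ) ≤ (Nat.factorial p.2 : ℝ) := by
      exact_mod_cast Nat.one_le_iff_ne_zero.mpr (Nat.factorial_ne_zero _)
    have hden : Real.Gamma x ^ 2 * x ^ (k+1) ≤
        (Nat.factorial p.1 : ℝ) * (Nat.factorial p.2 : ℝ) *
            Real.Gamma ((m : ℝ) + (p.1 : ℝ) + 3 / 2) * Real.Gamma ((m : ℝ) + (p.2 : ℝ) + 3 / 2) := by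
      have key : (Real.Gamma x * x ^ p.1) * (Real.Gamma x * x ^ p.2) ≤
          Real.Gamma ((m : ℝ) + (p.1 : ℝ) + 3 / 2) * Real.Gamma ((m : ℝ) + (p.2 : ℝ) + 3 / 2) := by
        apply mul_le_mul h1 h2 (by positivity) (le_trans (by positivity) h1)
      have heq : (Real.Gamma x * x ^ p.1) * (Real.Gamma x * x ^ p.2) =
          Real.Gamma x ^ 2 * x ^ (k+1) := by
        rw [← hps, pow_add]; ring
      rw [heq] at key
      calc Real.Gamma x ^ 2 * x ^ (k+1)
          ≤ Real.Gamma ((m : ℝ) + (p.1 : ℝ) + 3 / 2) * Real.Gamma ((m : ℝ) + (p.2 : ℝ) + 3 / 2) := key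
        _ ≤ (Nat.factorial p.1 : ℝ) * (Nat.factorial p.2 : ℝ) *
            Real.Gamma ((m : ℝ) + (p.1 : ℝ) + 3 / 2) * Real.Gamma ((m : ℝ) + (p.2 : ℝ) + 3 / 2) := by
            have hg1 : 0 < Real.Gamma ((m : ℝ) + (p.1 : ℝ) + 3 / 2) :=
              lt_of_lt_of_le (by positivity) h1
            have hg2 : 0 < Real.Gamma ((m : ℝ) + (p.2 : ℝ) + 3 / 2) :=
              lt_of_lt_of_le (by positivity) h2
            have hff : (1:ℝ) ≤ (Nat.factorial p.1 : ℝ) * (Nat.factorial p.2 : ℝ) := by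
              calc (1:ℝ) = 1 * 1 := by ring
                _ ≤ _ := mul_le_mul hf1 hf2 zero_le_one (le_trans zero_le_one hf1)
            nlinarith [mul_pos hg1 hg2, hff]
    have hxg : Real.Gamma ((m : ℝ) + 3 / 2) ^ 2 = Real.Gamma x ^ 2 := by rw [hxdef]
    rw [hxg]
    calc Real.Gamma x ^ 2 /
          ((Nat.factorial p.1 : ℝ) * (Nat.factorial p.2 : ℝ) *
            Real.Gamma ((m : ℝ) + (p.1 : ℝ) + 3 / 2) * Real.Gamma ((m : ℝ) + (p.2 : ℝ) + 3 / 2))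
        ≤ Real.Gamma x ^ 2 / (Real.Gamma x ^ 2 * x ^ (k+1)) := by
          apply div_le_div_of_nonneg_left (by positivity) (by positivity) hden
      _ = (x ^ (k+1))⁻¹ := by field_simp
  -- sum bound
  have hsum : ∑ p ∈ Finset.HasAntidiagonal.antidiagonal (k + 1),
      Real.Gamma ((m : ℝ) + 3 / 2) ^ 2 /
          ((Nat.factorial p.1 : ℝ) * (Nat.factorial p.2 : ℝ) *
            Real.Gamma ((m : ℝ) + (p.1 : ℝ) + 3 / 2) * Real.Gamma ((m : ℝ) + (p.2 : ℝ) + 3 / 2))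
      ≤ ((k:ℝ) + 2) * (x ^ (k+1))⁻¹ := by
    have := Finset.sum_le_card_nsmul (Finset.HasAntidiagonal.antidiagonal (k+1)) _ _ hsummand
    rwa [Finset.Nat.card_antidiagonal, nsmul_eq_mul, show (((k+1)+1 : ℕ):ℝ) = (k:ℝ) + 2 by push_cast; ring] at this
  -- nonnegativity of the sum
  have hsum_nonneg : 0 ≤ ∑ p ∈ Finset.HasAntidiagonal.antidiagonal (k + 1),
      Real.Gamma ((m : ℝ) + 3 / 2) ^ 2 /
          ((Nat.factorial p.1 : ℝ) * (Nat.factorial p.2 : ℝ) *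
            Real.Gamma ((m : ℝ) + (p.1 : ℝ) + 3 / 2) * Real.Gamma ((m : ℝ) + (p.2 : ℝ) + 3 / 2)) := by
    apply Finset.sum_nonneg
    intro p hp
    have hg1 : 0 < Real.Gamma ((m : ℝ) + (p.1 : ℝ) + 3 / 2) :=
      Real.Gamma_pos_of_pos (by positivity)
    have hg2 : 0 < Real.Gamma ((m : ℝ) + (p.2 : ℝ) + 3 / 2) :=
      Real.Gamma_pos_of_pos (by positivity)
    have hf1 : (0:ℝ) < (Nat.factorial p.1 : ℝ) := by exact_mod_cast Nat.factorial_pos _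
    have hf2 : (0:ℝ) < (Nat.factorial p.2 : ℝ) := by exact_mod_cast Nat.factorial_pos _
    positivity
  have hR0 : 0 ≤ (2 * (m : ℝ) + 3) / (2 * (m : ℝ) + 2 * ((k : ℝ) + 1) + 3) := by positivity
  have hR1 : (2 * (m : ℝ) + 3) / (2 * (m : ℝ) + 2 * ((k : ℝ) + 1) + 3) ≤ 1 := by
    rw [div_le_one (by positivity)]
    have : (0:ℝ) ≤ (k:ℝ) := Nat.cast_nonneg k
    linarith
  rw [abs_mul, abs_mul, abs_mul, abs_pow, abs_neg, abs_one, one_pow, one_mul,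
    abs_of_nonneg hR0, abs_of_nonneg hsum_nonneg, abs_of_nonneg (by positivity : (0:ℝ) ≤ (r0/2) ^ (2*(k+1)))]
  have hk2 : (k:ℝ) + 2 ≤ 2 ^ (k+1) := by
    have := Nat.lt_two_pow_self (n := k+1)
    have : (k + 2 : ℕ) ≤ 2 ^ (k+1) := this
    exact_mod_cast this
  calc (r0 / 2) ^ (2 * (k + 1)) *
        ((2 * (m : ℝ) + 3) / (2 * (m : ℝ) + 2 * ((k : ℝ) + 1) + 3)) * _
      ≤ (r0 / 2) ^ (2 * (k + 1)) * 1 * (((k:ℝ) + 2) * (x ^ (k+1))⁻¹) := by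
        apply mul_le_mul
        · exact mul_le_mul_of_nonneg_left hR1 (by positivity)
        · exact hsum
        · exact hsum_nonneg
        · positivity
    _ ≤ (r0 / 2) ^ (2 * (k + 1)) * 1 * ((2:ℝ) ^ (k+1) * (x ^ (k+1))⁻¹) := by
        apply mul_le_mul_of_nonneg_left _ (by positivity)
        exact mul_le_mul_of_nonneg_right hk2 (by positivity)
    _ = (r0 ^ 2 / (2 * (m:ℝ) + 3)) ^ (k + 1) := by
        rw [hxdef]
        rw [show 2 * (k+1) = (k+1) + (k+1) by ring, pow_add]
        rw [mul_one, ← inv_pow, ← mul_pow, ← mul_pow, ← mul_pow]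
        congr 1
        field_simp

theorem I2_tendsto_zero (r0 : ℝ) (hr0 : 0 < r0) :
    Tendsto (fun m : ℕ => I2 m r0) atTop (𝓝 0) := by
  set q : ℕ → ℝ := fun m => r0 ^ 2 / (2 * (m:ℝ) + 3) with hqdef
  have hq0 : ∀ m, 0 ≤ q m := fun m => by positivity
  have hden : Tendsto (fun m : ℕ => 2 * (m:ℝ) + 3) atTop atTop := by
    apply tendsto_atTop_add_const_right
    exact (tendsto_natCast_atTop_atTop (R := ℝ)).const_mul_atTop (by norm_num)
  have hq : Tendsto q atTop (𝓝 0) := Tendsto.div_atTop tendsto_const_nhds hden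
  have hg : Tendsto (fun m : ℕ => 2 * q m) atTop (𝓝 0) := by
    have := hq.const_mul (2:ℝ)
    simpa using this
  apply squeeze_zero_norm' _ hg
  filter_upwards [hq.eventually_lt_const (by norm_num : (0:ℝ) < 1/2)] with m hqhalf
  have hq1 : q m < 1 := lt_trans hqhalf (by norm_num)
  have hgsum : Summable (fun k : ℕ => q m ^ (k+1)) := by
    have := (summable_geometric_of_lt_one (hq0 m) hq1).mul_left (q m)
    simpa [pow_succ, mul_comm] using this
  set f : ℕ → ℝ := fun k =>
    (-1 : ℝ) ^ (k + 1) * (r0 / 2) ^ (2 * (k + 1)) *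
      ((2 * (m : ℝ) + 3) / (2 * (m : ℝ) + 2 * ((k : ℝ) + 1) + 3)) *
      ∑ p ∈ Finset.HasAntidiagonal.antidiagonal (k + 1),
        Real.Gamma ((m : ℝ) + 3 / 2) ^ 2 /
          ((Nat.factorial p.1 : ℝ) * (Nat.factorial p.2 : ℝ) *
            Real.Gamma ((m : ℝ) + (p.1 : ℝ) + 3 / 2) * Real.Gamma ((m : ℝ) + (p.2 : ℝ) + 3 / 2)) with hfdef
  have hbound : ∀ k : ℕ, ‖f k‖ ≤ q m ^ (k+1) := by
    intro k
    rw [Real.norm_eq_abs]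
    exact I2_term_bound m k r0 hr0
  have hfn : Summable (fun k => ‖f k‖) :=
    Summable.of_nonneg_of_le (fun k => norm_nonneg _) hbound hgsum
  have h1 : ‖I2 m r0‖ ≤ ∑' k, ‖f k‖ := norm_tsum_le_tsum_norm hfn
  have h2 : ∑' k, ‖f k‖ ≤ ∑' k, q m ^ (k+1) := Summable.tsum_le_tsum hbound hfn hgsum
  have h3 : ∑' k : ℕ, q m ^ (k+1) = q m * (1 - q m)⁻¹ := by
    have : ∑' k : ℕ, q m ^ (k+1) = ∑' k : ℕ, q m * q m ^ k := by
      congr 1; funext k; rw [pow_succ]; ring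
    rw [this, tsum_mul_left, tsum_geometric_of_lt_one (hq0 m) hq1]
  have h4 : q m * (1 - q m)⁻¹ ≤ 2 * q m := by
    have h5 : (1 - q m)⁻¹ ≤ 2 := by
      rw [inv_le_comm₀ (by linarith) (by norm_num)]
      linarith
    calc q m * (1 - q m)⁻¹ ≤ q m * 2 := mul_le_mul_of_nonneg_left h5 (hq0 m)
      _ = 2 * q m := by ring
  calc ‖I2 m r0‖ ≤ ∑' k, ‖f k‖ := h1
    _ ≤ ∑' k, q m ^ (k+1) := h2
    _ = q m * (1 - q m)⁻¹ := h3
    _ ≤ 2 * q m := h4
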